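/- Let a be a positive integer and let n = ⌊√a⌋. If t, t+1, …, t+k are all in T_s(a) (with k ≥ 1), then t−n, t+1−n, …, t+k−1−n are all in T_{s−1}(a). -/
import Mathlib


/-- membership in T_s(a) -/
def memT (s a t : ℕ) : Prop := 0 < t ∧ s^2 * a < t^2 ∧ t^2 < s^2 * (a+1)

private lemma sq_lt_sq_nat {x y : ℕ} (h : x ^ 2 < y ^ 2) : x < y := by
  by_contra hc
  push_neg at hc
  exact absurd (Nat.pow_le_pow_left hc 2) (not_le.2 h)

theorem stmt_5 (a n s t k : ℕ) (ha : 0 < a) (hn : n = Nat.sqrt a)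
    (hs : 2 ≤ s) (ht : n < t) (hk : 1 ≤ k)
    (h : ∀ i : ℕ, i ≤ k → memT s a (t + i)) :
    ∀ i : ℕ, i ≤ k - 1 → memT (s - 1) a (t + i - n) := by
  intro i hi
  obtain ⟨hpos, hlo, _⟩ := h i (le_trans hi (Nat.sub_le k 1))
  obtain ⟨_, _, hhi⟩ := h (i + 1) (by omega)
  have hn2 : n * n ≤ a := by rw [hn]; exact Nat.sqrt_le a
  have hn3 : a < (n + 1) * (n + 1) := by rw [hn]; exact Nat.lt_succ_sqrt a
  have hun : n < t + i := lt_of_lt_of_le ht (Nat.le_add_right t i)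
  obtain ⟨v, hv⟩ : ∃ v, t + i = n + v + 1 := ⟨t + i - n - 1, by omega⟩
  obtain ⟨r, hr⟩ : ∃ r, s = r + 1 := ⟨s - 1, by omega⟩
  have hrpos : 1 ≤ r := by omega
  rw [hv, hr] at hlo
  have hv2 : t + (i + 1) = n + v + 2 := by omega
  rw [hv2, hr] at hhi
  have hv' : t + i - n = v + 1 := by omega
  have hs' : s - 1 = r := by omega
  rw [hv', hs']
  have hr2 : (0 : ℕ) < r ^ 2 := by positivity
  refine ⟨by omega, ?_, ?_⟩
  · -- lower bound: r^2 * a < (v+1)^2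
    have h1 : (r + 1) * n < n + v + 1 := by
      apply sq_lt_sq_nat
      calc ((r + 1) * n) ^ 2 = (r + 1) ^ 2 * (n * n) := by ring
        _ ≤ (r + 1) ^ 2 * a := Nat.mul_le_mul_left _ hn2
        _ < (n + v + 1) ^ 2 := hlo
    have h2 : r * (n + v + 1) < (r + 1) * (v + 1) := by
      have e : (r + 1) * n = r * n + n := by ring
      have e2 : r * (n + v + 1) = r * n + r * v + r := by ring
      have e3 : (r + 1) * (v + 1) = r * v + r + v + 1 := by ring
      omega
    have c2 : (r * (n + v + 1)) ^ 2 ≤ ((r + 1) * (v + 1)) ^ 2 :=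
      Nat.pow_le_pow_left (le_of_lt h2) 2
    have c3 : (r + 1) ^ 2 * (r ^ 2 * a) < (r + 1) ^ 2 * (v + 1) ^ 2 := by
      calc (r + 1) ^ 2 * (r ^ 2 * a) = r ^ 2 * ((r + 1) ^ 2 * a) := by ring
        _ < r ^ 2 * (n + v + 1) ^ 2 := mul_lt_mul_of_pos_left hlo hr2
        _ = (r * (n + v + 1)) ^ 2 := by ring
        _ ≤ ((r + 1) * (v + 1)) ^ 2 := c2
        _ = (r + 1) ^ 2 * (v + 1) ^ 2 := by ring
    exact Nat.lt_of_mul_lt_mul_left c3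
  · -- upper bound: (v+1)^2 < r^2 * (a+1)
    have h1 : n + v + 2 < (r + 1) * (n + 1) := by
      apply sq_lt_sq_nat
      calc (n + v + 2) ^ 2 < (r + 1) ^ 2 * (a + 1) := hhi
        _ ≤ (r + 1) ^ 2 * ((n + 1) * (n + 1)) := Nat.mul_le_mul_left _ hn3
        _ = ((r + 1) * (n + 1)) ^ 2 := by ring
    have h2 : (r + 1) * (v + 1) < r * (n + v + 2) := by
      have e : (r + 1) * (n + 1) = r * n + r + n + 1 := by ring
      have e2 : r * (n + v + 2) = r * n + r * v + 2 * r := by ring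
      have e3 : (r + 1) * (v + 1) = r * v + r + v + 1 := by ring
      omega
    have c2 : ((r + 1) * (v + 1)) ^ 2 ≤ (r * (n + v + 2)) ^ 2 :=
      Nat.pow_le_pow_left (le_of_lt h2) 2
    have c3 : (r + 1) ^ 2 * (v + 1) ^ 2 < (r + 1) ^ 2 * (r ^ 2 * (a + 1)) := by
      calc (r + 1) ^ 2 * (v + 1) ^ 2 = ((r + 1) * (v + 1)) ^ 2 := by ring
        _ ≤ (r * (n + v + 2)) ^ 2 := c2
        _ = r ^ 2 * (n + v + 2) ^ 2 := by ring
        _ < r ^ 2 * ((r + 1) ^ 2 * (a + 1)) := mul_lt_mul_of_pos_left hhi hr2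
        _ = (r + 1) ^ 2 * (r ^ 2 * (a + 1)) := by ring
    exact Nat.lt_of_mul_lt_mul_left c3
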